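/- Let R be a commutative ring equipped with a ℤ/2-grading R = R⁺ ⊕ R⁻ (a graded ring structure indexed by ℤ/2ℤ), and let 𝔞 ⊆ R be a homogeneous ideal, so 𝔞 = 𝔞⁺ ⊕ 𝔞⁻ where 𝔞± = 𝔞 ∩ R±. Let J be the ideal of R generated by the even part 𝔞⁺. Then for every i ≥ 0 one has J^i ⊆ 𝔞^i and 𝔞^{2i} ⊆ J^i. Consequently, the 𝔞-adic topology on R coincides with the J-adic topology. -/

import Mathlib

set_option maxHeartbeats 1000000


/-- Let `R` be a commutative ring with a `ℤ/2`-grading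
`R = R⁺ ⊕ R⁻` and let `𝔞 ⊆ R` be a homogeneous ideal.  If `J` is the ideal
generated by the even part `𝔞⁺ = 𝔞 ∩ R⁺`, then `J^i ⊆ 𝔞^i` and `𝔞^{2i} ⊆ J^i`
for all `i ≥ 0`; consequently the `𝔞`-adic and the `J`-adic topologies on `R`
coincide. -/
theorem statement1 {R : Type*} [CommRing R]
    (𝒜 : ZMod 2 → AddSubgroup R) [GradedRing 𝒜]
    (𝔞 : Ideal R) (h𝔞 : 𝔞.IsHomogeneous 𝒜)
    (J : Ideal R) (hJ : J = Ideal.span ((𝔞 : Set R) ∩ (𝒜 0 : Set R))) :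
    (∀ i : ℕ, J ^ i ≤ 𝔞 ^ i ∧ 𝔞 ^ (2 * i) ≤ J ^ i) ∧
      𝔞.adicTopology = J.adicTopology := by
  classical
  -- J ≤ 𝔞
  have hJle : J ≤ 𝔞 := by
    rw [hJ, Ideal.span_le]
    exact Set.inter_subset_left
  -- even elements of 𝔞 are in J
  have hmemJ : ∀ x : R, x ∈ 𝔞 → x ∈ 𝒜 0 → x ∈ J := by
    intro x hx1 hx2
    rw [hJ]
    exact Ideal.subset_span ⟨hx1, hx2⟩
  -- decomposition of an element into its two components
  have hdec : ∀ a : R, a = (DirectSum.decompose 𝒜 a 0 : R) +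
      (DirectSum.decompose 𝒜 a 1 : R) := by
    intro a
    conv_lhs => rw [← DirectSum.sum_support_decompose 𝒜 a]
    rw [Finset.sum_subset (Finset.subset_univ (DFinsupp.support (DirectSum.decompose 𝒜 a)))
      (fun i _ hi => by simp [DFinsupp.notMem_support_iff.mp hi])]
    have huniv : (Finset.univ : Finset (ZMod 2)) = {0, 1} := by decide
    rw [huniv, Finset.sum_insert (by decide), Finset.sum_singleton]
  -- 𝔞 * 𝔞 ≤ J
  have hsq : 𝔞 * 𝔞 ≤ J := by
    rw [Ideal.mul_le]
    intro a ha b hb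
    set a0 : R := (DirectSum.decompose 𝒜 a 0 : R) with ha0
    set a1 : R := (DirectSum.decompose 𝒜 a 1 : R) with ha1
    set b0 : R := (DirectSum.decompose 𝒜 b 0 : R) with hb0
    set b1 : R := (DirectSum.decompose 𝒜 b 1 : R) with hb1
    have ha0J : a0 ∈ J := hmemJ _ (h𝔞 0 ha) (SetLike.coe_mem _)
    have hb0J : b0 ∈ J := hmemJ _ (h𝔞 0 hb) (SetLike.coe_mem _)
    have ha1𝔞 : a1 ∈ 𝔞 := h𝔞 1 ha
    have hb1𝔞 : b1 ∈ 𝔞 := h𝔞 1 hb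
    have h11 : a1 * b1 ∈ J := by
      refine hmemJ _ (Ideal.mul_mem_left _ _ hb1𝔞) ?_
      have := SetLike.mul_mem_graded (SetLike.coe_mem (DirectSum.decompose 𝒜 a 1))
        (SetLike.coe_mem (DirectSum.decompose 𝒜 b 1))
      have h2 : (1 + 1 : ZMod 2) = 0 := by decide
      rwa [h2] at this
    have hab : a * b = a0 * b0 + a0 * b1 + a1 * b0 + a1 * b1 := by
      conv_lhs => rw [hdec a, hdec b]
      rw [← ha0, ← ha1, ← hb0, ← hb1]
      ring
    rw [hab]
    exact add_mem (add_mem (add_mem (Ideal.mul_mem_right _ _ ha0J)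
      (Ideal.mul_mem_right _ _ ha0J)) (Ideal.mul_mem_left _ _ hb0J)) h11
  -- the power inclusions
  have hpow : ∀ i : ℕ, J ^ i ≤ 𝔞 ^ i ∧ 𝔞 ^ (2 * i) ≤ J ^ i := by
    intro i
    constructor
    · exact Ideal.pow_right_mono hJle i
    · calc 𝔞 ^ (2 * i) = (𝔞 ^ 2) ^ i := by rw [pow_mul]
        _ ≤ J ^ i := Ideal.pow_right_mono (by rw [pow_two]; exact hsq) i
  refine ⟨hpow, ?_⟩
  -- topologies coincide
  letI := 𝔞.adicTopology
  haveI htr : IsTopologicalRing R := 𝔞.ringFilterBasis.isTopologicalRing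
  haveI : IsTopologicalAddGroup R := inferInstance
  have h𝔞adic : IsAdic 𝔞 := rfl
  rw [isAdic_iff] at h𝔞adic
  have : IsAdic J := by
    rw [isAdic_iff]
    constructor
    · intro n
      exact Submodule.isOpen_mono (hpow n).2 (h𝔞adic.1 (2 * n))
    · intro s hs
      obtain ⟨n, hn⟩ := h𝔞adic.2 s hs
      exact ⟨n, Set.Subset.trans (hpow n).1 hn⟩
  exact this
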